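/- Let ψ be a fixed point free abelian map on a finite group G (ψ(g) = g implies g = 1), and let n > m ≥ 0. Then δ^m : G → G is a bijection satisfying δ^m(g ∘_m h) = δ^m(g)·δ^m(h) and δ^m(g ∘_n h) = δ^m(g) ∘_{n-m} δ^m(h) for all g, h ∈ G; hence the skew left brace (G, ∘_m, ∘_n) is isomorphic to the skew left brace (G, ∘_0, ∘_{n-m}). -/
import Mathlib


/-- `aDelta ψ g = g · ψ(g⁻¹)`, the map `δ = 1 - ψ`. -/
def aDelta {G : Type*} [Group G] (ψ : G → G) (g : G) : G := g * ψ g⁻¹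

/-- `aPsi ψ n g = (δⁿ(g))⁻¹ · g`, the map `ψ_n = -(1-ψ)ⁿ + 1` (so `ψ_0 = 0`, `ψ_1 = ψ`). -/
def aPsi {G : Type*} [Group G] (ψ : G → G) (n : ℕ) (g : G) : G :=
  ((aDelta ψ)^[n] g)⁻¹ * g

/-- `g ∘_n h = g · ψ_n(g⁻¹) · h · ψ_n(g)`. -/
def aCirc {G : Type*} [Group G] (ψ : G → G) (n : ℕ) (g h : G) : G :=
  g * aPsi ψ n g⁻¹ * h * aPsi ψ n g

namespace Stmt18Aux

variable {G : Type*} [Group G] {ψ : G → G}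

/-- The (abelian) subgroup generated by the image of `ψ`. -/
def S (ψ : G → G) : Subgroup G := Subgroup.closure (Set.range ψ)

lemma mem_S (a : G) : ψ a ∈ S ψ := Subgroup.subset_closure ⟨a, rfl⟩

section
variable (hψ : ∀ a b : G, ψ (a * b) = ψ a * ψ b)
variable (hab : ∀ a b : G, ψ a * ψ b = ψ b * ψ a)

include hψ in
lemma psi_one : ψ 1 = 1 := by
  have h : ψ 1 * ψ 1 = ψ 1 * 1 := by rw [← hψ, one_mul, mul_one]
  exact mul_left_cancel h

include hψ in
lemma psi_inv (a : G) : ψ a⁻¹ = (ψ a)⁻¹ :=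
  eq_inv_of_mul_eq_one_left (by rw [← hψ, inv_mul_cancel, psi_one hψ])

include hab in
lemma comm_S {x : G} (hx : x ∈ S ψ) (a : G) : Commute x (ψ a) := by
  refine Subgroup.closure_induction (fun y hy => ?_) ?_ ?_ ?_ hx
  · obtain ⟨b, rfl⟩ := hy; exact hab b a
  · exact Commute.one_left _
  · exact fun u v _ _ h1 h2 => h1.mul_left h2
  · exact fun u _ h1 => h1.inv_left

include hab in
lemma comm_SS {x y : G} (hx : x ∈ S ψ) (hy : y ∈ S ψ) : Commute x y := by
  refine Subgroup.closure_induction (fun z hz => ?_) ?_ ?_ ?_ hy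
  · obtain ⟨b, rfl⟩ := hz; exact comm_S hab hx b
  · exact Commute.one_right _
  · exact fun u v _ _ h1 h2 => h1.mul_right h2
  · exact fun u _ h1 => h1.inv_right

include hψ in
lemma psi_mem_S {x : G} (hx : x ∈ S ψ) : ψ x ∈ S ψ := by
  refine Subgroup.closure_induction (fun y hy => ?_) ?_ ?_ ?_ hx
  · obtain ⟨b, rfl⟩ := hy; exact mem_S _
  · rw [psi_one hψ]; exact one_mem _
  · intro u v _ _ h1 h2; rw [hψ]; exact mul_mem h1 h2
  · intro u _ h1; rw [psi_inv hψ]; exact inv_mem h1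

include hψ in
lemma aDelta_eq (g : G) : aDelta ψ g = g * (ψ g)⁻¹ := by rw [aDelta, psi_inv hψ]

include hψ in
lemma delta_mem_S {x : G} (hx : x ∈ S ψ) : aDelta ψ x ∈ S ψ := by
  rw [aDelta]; exact mul_mem hx (psi_mem_S hψ (inv_mem hx))

include hψ in
lemma iter_delta_mem_S (n : ℕ) {x : G} (hx : x ∈ S ψ) : (aDelta ψ)^[n] x ∈ S ψ := by
  induction n generalizing x with
  | zero => exact hx
  | succ n ih => rw [Function.iterate_succ_apply]; exact ih (delta_mem_S hψ hx)

include hψ in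
lemma delta_psi (g : G) : aDelta ψ (ψ g) = ψ (aDelta ψ g) := by
  simp only [aDelta, hψ, psi_inv hψ]

include hψ in
lemma iter_delta_psi (n : ℕ) (g : G) :
    (aDelta ψ)^[n] (ψ g) = ψ ((aDelta ψ)^[n] g) := by
  induction n with
  | zero => rfl
  | succ n ih => rw [Function.iterate_succ_apply', ih, delta_psi hψ,
      Function.iterate_succ_apply']

include hψ in
lemma psi_aPsi (n : ℕ) (g : G) : ψ (aPsi ψ n g) = aPsi ψ n (ψ g) := by
  rw [aPsi, aPsi, hψ, psi_inv hψ, iter_delta_psi hψ]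

lemma aPsi_zero (g : G) : aPsi ψ 0 g = 1 := by simp [aPsi]

include hψ in
lemma aPsi_succ (n : ℕ) (g : G) :
    aPsi ψ (n + 1) g = aPsi ψ n (aDelta ψ g) * ψ g := by
  rw [aPsi, aPsi, Function.iterate_succ_apply, aDelta_eq hψ]
  group

include hψ in
lemma aPsi_mem_S (n : ℕ) (g : G) : aPsi ψ n g ∈ S ψ := by
  induction n generalizing g with
  | zero => rw [aPsi_zero]; exact one_mem _
  | succ n ih => rw [aPsi_succ hψ]; exact mul_mem (ih _) (mem_S _)

include hψ hab in
lemma delta_inv_S {x : G} (hx : x ∈ S ψ) : aDelta ψ x⁻¹ = (aDelta ψ x)⁻¹ := by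
  rw [aDelta_eq hψ, aDelta_eq hψ, psi_inv hψ, inv_inv, mul_inv_rev, inv_inv]
  exact (comm_S hab hx x).inv_left.eq

include hψ hab in
lemma iter_delta_inv_S (n : ℕ) {x : G} (hx : x ∈ S ψ) :
    (aDelta ψ)^[n] x⁻¹ = ((aDelta ψ)^[n] x)⁻¹ := by
  induction n generalizing x with
  | zero => rfl
  | succ n ih =>
    rw [Function.iterate_succ_apply, Function.iterate_succ_apply,
      delta_inv_S hψ hab hx, ih (delta_mem_S hψ hx)]

include hψ hab in
lemma aPsi_inv_S (n : ℕ) {x : G} (hx : x ∈ S ψ) :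
    aPsi ψ n x⁻¹ = (aPsi ψ n x)⁻¹ := by
  rw [aPsi, aPsi, iter_delta_inv_S hψ hab n hx, inv_inv, mul_inv_rev, inv_inv]
  exact ((comm_SS hab (iter_delta_mem_S hψ n hx) hx).inv_right.eq)

include hψ hab in
lemma psi_aPsi_mul (n : ℕ) (g : G) :
    ψ (aPsi ψ n g⁻¹) * ψ (aPsi ψ n g) = 1 := by
  rw [psi_aPsi hψ, psi_aPsi hψ, psi_inv hψ, aPsi_inv_S hψ hab n (mem_S g),
    inv_mul_cancel]

include hψ hab in
lemma delta_conj {c : G} (hc : c ∈ S ψ) (x : G) :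
    aDelta ψ (c * x * c⁻¹) = c * aDelta ψ x * c⁻¹ := by
  have hx : ψ (c * x * c⁻¹) = ψ x := by
    rw [hψ, hψ, psi_inv hψ, hab c x, mul_assoc, mul_inv_cancel, mul_one]
  rw [aDelta_eq hψ, aDelta_eq hψ, hx]
  have h := ((comm_S hab hc x).inv_left.inv_right.eq)
  rw [mul_assoc (c * x), h]
  group

include hψ hab in
lemma iter_delta_conj (n : ℕ) {c : G} (hc : c ∈ S ψ) (x : G) :
    (aDelta ψ)^[n] (c * x * c⁻¹) = c * (aDelta ψ)^[n] x * c⁻¹ := by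
  induction n generalizing x with
  | zero => rfl
  | succ n ih =>
    rw [Function.iterate_succ_apply, Function.iterate_succ_apply,
      delta_conj hψ hab hc, ih]

include hψ hab in
lemma aPsi_conj (n : ℕ) {c : G} (hc : c ∈ S ψ) (x : G) :
    aPsi ψ n (c * x * c⁻¹) = aPsi ψ n x := by
  have hp : Commute c (aPsi ψ n x) := comm_SS hab hc (aPsi_mem_S hψ n x)
  have key : c * aPsi ψ n x * c⁻¹ = aPsi ψ n x := by
    rw [hp.eq, mul_assoc, mul_inv_cancel, mul_one]
  rw [aPsi, iter_delta_conj hψ hab n hc,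
    show (c * (aDelta ψ)^[n] x * c⁻¹)⁻¹ * (c * x * c⁻¹)
      = c * (((aDelta ψ)^[n] x)⁻¹ * x) * c⁻¹ from by group]
  exact key

include hψ hab in
lemma aPsi_delta_inv (n : ℕ) (g : G) :
    aPsi ψ n (aDelta ψ g)⁻¹ = aPsi ψ n (aDelta ψ g⁻¹) := by
  have h : (aDelta ψ g)⁻¹ = ψ g * aDelta ψ g⁻¹ * (ψ g)⁻¹ := by
    rw [aDelta_eq hψ, aDelta_eq hψ, psi_inv hψ, inv_inv]
    group
  rw [h, aPsi_conj hψ hab n (mem_S g)]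

include hψ in
lemma aPsi_pred (n : ℕ) (g : G) :
    aPsi ψ n (aDelta ψ g) = aPsi ψ (n + 1) g * (ψ g)⁻¹ := by
  rw [aPsi_succ hψ, mul_assoc, mul_inv_cancel, mul_one]

include hψ hab in
lemma step (k : ℕ) (g h : G) :
    aDelta ψ (aCirc ψ (k + 1) g h) = aCirc ψ k (aDelta ψ g) (aDelta ψ h) := by
  set p := aPsi ψ (k + 1) g⁻¹ with hp_def
  set q := aPsi ψ (k + 1) g with hq_def
  have hpS : p ∈ S ψ := aPsi_mem_S hψ _ _
  have hqS : q ∈ S ψ := aPsi_mem_S hψ _ _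
  have hA : aPsi ψ k (aDelta ψ g)⁻¹ = p * ψ g := by
    rw [aPsi_delta_inv hψ hab, aPsi_pred hψ, psi_inv hψ, inv_inv, ← hp_def]
  have hB : aPsi ψ k (aDelta ψ g) = q * (ψ g)⁻¹ := by
    rw [aPsi_pred hψ, ← hq_def]
  have hQ : (ψ q)⁻¹ = ψ p := inv_eq_of_mul_eq_one_left (psi_aPsi_mul hψ hab _ g)
  have c1 : Commute p (ψ g) := comm_S hab hpS g
  have c2 : Commute q (ψ h) := comm_S hab hqS h
  have c3 : Commute (ψ p) (ψ h) := hab p h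
  have swap1 : ∀ z : G, (ψ g)⁻¹ * (p * z) = p * ((ψ g)⁻¹ * z) := by
    intro z; rw [← mul_assoc, ← c1.inv_right.eq, mul_assoc]
  have swap2 : ∀ z : G, ψ p * ((ψ h)⁻¹ * z) = (ψ h)⁻¹ * (ψ p * z) := by
    intro z; rw [← mul_assoc, c3.inv_right.eq, mul_assoc]
  have swap3 : ∀ z : G, q * ((ψ h)⁻¹ * z) = (ψ h)⁻¹ * (q * z) := by
    intro z; rw [← mul_assoc, c2.inv_right.eq, mul_assoc]
  rw [aCirc, aCirc, ← hp_def, ← hq_def, hA, hB,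
    aDelta_eq hψ (g * p * h * q), aDelta_eq hψ g, aDelta_eq hψ h,
    hψ, hψ, hψ]
  simp only [mul_inv_rev, mul_assoc, hQ, swap1, swap2, swap3,
    inv_mul_cancel_left, mul_inv_cancel_left]

include hψ hab in
lemma iter_step (m k : ℕ) (g h : G) :
    (aDelta ψ)^[m] (aCirc ψ (k + m) g h)
      = aCirc ψ k ((aDelta ψ)^[m] g) ((aDelta ψ)^[m] h) := by
  induction m generalizing g h with
  | zero => rfl
  | succ m ih =>
    have e : k + (m + 1) = (k + m) + 1 := by omega
    rw [e, Function.iterate_succ_apply, step hψ hab (k + m) g h, ih,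
      ← Function.iterate_succ_apply, ← Function.iterate_succ_apply]

end

end Stmt18Aux

open Stmt18Aux in
/-- If ψ is a fixed point free abelian map on a finite group `G` and `n > m ≥ 0`,
then `δ^m` is a bijection which is a group homomorphism `(G,∘_m) → (G,∘_0)` and
`(G,∘_n) → (G,∘_{n-m})`; hence `(G, ∘_m, ∘_n) ≅ (G, ∘_0, ∘_{n-m})` as skew left braces. -/
theorem stmt18 {G : Type*} [Group G] [Finite G] (ψ : G → G)
    (hψ : ∀ a b : G, ψ (a * b) = ψ a * ψ b)
    (hab : ∀ a b : G, ψ a * ψ b = ψ b * ψ a)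
    (hfpf : ∀ g : G, ψ g = g → g = 1)
    (m n : ℕ) (hmn : m < n) :
    Function.Bijective ((aDelta ψ)^[m]) ∧
    (∀ g h : G, (aDelta ψ)^[m] (aCirc ψ m g h) =
      (aDelta ψ)^[m] g * (aDelta ψ)^[m] h) ∧
    (∀ g h : G, (aDelta ψ)^[m] (aCirc ψ n g h) =
      aCirc ψ (n - m) ((aDelta ψ)^[m] g) ((aDelta ψ)^[m] h)) ∧
    (∃ f : G → G, Function.Bijective f ∧
      (∀ g h : G, f (aCirc ψ m g h) = aCirc ψ 0 (f g) (f h)) ∧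
      (∀ g h : G, f (aCirc ψ n g h) = aCirc ψ (n - m) (f g) (f h))) := by
  have hinj : Function.Injective (aDelta ψ) := by
    intro a b hd
    have h1 : a * (ψ a)⁻¹ = b * (ψ b)⁻¹ := by
      rw [aDelta_eq hψ, aDelta_eq hψ] at hd; exact hd
    have h2 : b⁻¹ * a = ψ (b⁻¹ * a) := by
      have := congrArg (fun z => b⁻¹ * z * ψ a) h1
      simp only [mul_assoc, inv_mul_cancel_left, inv_mul_cancel, mul_one] at this
      rw [hψ, psi_inv hψ]
      simpa using this
    have h3 := hfpf _ h2.symm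
    rw [inv_mul_eq_one] at h3
    exact h3.symm
  have hbij : Function.Bijective ((aDelta ψ)^[m]) :=
    (Finite.injective_iff_bijective.mp hinj).iterate m
  have part2 : ∀ g h : G, (aDelta ψ)^[m] (aCirc ψ m g h) =
      (aDelta ψ)^[m] g * (aDelta ψ)^[m] h := by
    intro g h
    have hst := iter_step hψ hab m 0 g h
    rw [zero_add] at hst
    rw [hst]; simp [aCirc, aPsi_zero]
  have part3 : ∀ g h : G, (aDelta ψ)^[m] (aCirc ψ n g h) =
      aCirc ψ (n - m) ((aDelta ψ)^[m] g) ((aDelta ψ)^[m] h) := by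
    intro g h
    have hst := iter_step hψ hab m (n - m) g h
    rwa [Nat.sub_add_cancel hmn.le] at hst
  refine ⟨hbij, part2, part3, (aDelta ψ)^[m], hbij, fun g h => ?_, part3⟩
  rw [part2]; simp [aCirc, aPsi_zero]
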